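/- Let L be a self-dual lattice of rank n and v ∈ L a primitive vector. Let L(v) = {x ∈ L : ⟨x,v⟩ = 0}. Then the quotient L(v)*/L(v) is isomorphic to Z/(‖v‖² Z). -/

import Mathlib

open scoped InnerProductSpace

/-- If `L` is a self-dual lattice of rank `n` and `v ∈ L` is primitive,
and `L(v)` is the sublattice of vectors orthogonal to `v`, then
`L(v)*/L(v) ≅ ℤ/‖v‖²ℤ`, where `L(v)*` is the dual of `L(v)` inside the
hyperplane `v^⊥`. -/
theorem stmt_2 (n : ℕ) (b : Module.Basis (Fin n) ℝ (EuclideanSpace ℝ (Fin n)))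
    (L : AddSubgroup (EuclideanSpace ℝ (Fin n)))
    (hL : (L : Set (EuclideanSpace ℝ (Fin n))) = ↑(Submodule.span ℤ (Set.range ⇑b)))
    (hselfdual : (L : Set (EuclideanSpace ℝ (Fin n))) =
      {x | ∀ y ∈ L, ∃ m : ℤ, ⟪x, y⟫_ℝ = (m : ℝ)})
    (v : EuclideanSpace ℝ (Fin n)) (hv : v ∈ L) (hv0 : v ≠ 0)
    (hprim : ∀ d : ℕ, 1 < d → ∀ w ∈ L, (d : ℝ) • w ≠ v)
    (Lv LvStar : AddSubgroup (EuclideanSpace ℝ (Fin n)))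
    (hLv : (Lv : Set (EuclideanSpace ℝ (Fin n))) = {x | x ∈ L ∧ ⟪x, v⟫_ℝ = 0})
    (hLvStar : (LvStar : Set (EuclideanSpace ℝ (Fin n))) =
      {x | ⟪x, v⟫_ℝ = 0 ∧ ∀ y ∈ Lv, ∃ m : ℤ, ⟪x, y⟫_ℝ = (m : ℝ)})
    (hle : Lv ≤ LvStar)
    (m : ℕ) (hm : ⟪v, v⟫_ℝ = (m : ℝ)) :
    Nonempty ((LvStar ⧸ Lv.addSubgroupOf LvStar) ≃+ ZMod m) := by
  classical
  -- basic membership characterizations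
  have hLd : ∀ x : EuclideanSpace ℝ (Fin n),
      x ∈ L ↔ ∀ y ∈ L, ∃ k : ℤ, ⟪x, y⟫_ℝ = (k : ℝ) := by
    intro x
    constructor
    · intro hx
      have : x ∈ (L : Set (EuclideanSpace ℝ (Fin n))) := hx
      rw [hselfdual] at this
      exact this
    · intro hx
      have : x ∈ {x : EuclideanSpace ℝ (Fin n) | ∀ y ∈ L, ∃ k : ℤ, ⟪x, y⟫_ℝ = (k : ℝ)} := hx
      rw [← hselfdual] at this
      exact this
  have hLvd : ∀ x : EuclideanSpace ℝ (Fin n), x ∈ Lv ↔ x ∈ L ∧ ⟪x, v⟫_ℝ = 0 := by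
    intro x
    constructor
    · intro hx
      have : x ∈ (Lv : Set (EuclideanSpace ℝ (Fin n))) := hx
      rw [hLv] at this; exact this
    · intro hx
      have : x ∈ {x : EuclideanSpace ℝ (Fin n) | x ∈ L ∧ ⟪x, v⟫_ℝ = 0} := hx
      rw [← hLv] at this; exact this
  have hLvSd : ∀ x : EuclideanSpace ℝ (Fin n),
      x ∈ LvStar ↔ ⟪x, v⟫_ℝ = 0 ∧ ∀ y ∈ Lv, ∃ k : ℤ, ⟪x, y⟫_ℝ = (k : ℝ) := by
    intro x
    constructor
    · intro hx
      have : x ∈ (LvStar : Set (EuclideanSpace ℝ (Fin n))) := hx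
      rw [hLvStar] at this; exact this
    · intro hx
      have : x ∈ {x : EuclideanSpace ℝ (Fin n) |
          ⟪x, v⟫_ℝ = 0 ∧ ∀ y ∈ Lv, ∃ k : ℤ, ⟪x, y⟫_ℝ = (k : ℝ)} := hx
      rw [← hLvStar] at this; exact this
  have hint : ∀ x ∈ L, ∀ y ∈ L, ∃ k : ℤ, ⟪x, y⟫_ℝ = (k : ℝ) := fun x hx => (hLd x).1 hx
  -- positivity of m
  have hmpos : (0 : ℝ) < (m : ℝ) := by
    rw [← hm]
    exact lt_of_le_of_ne real_inner_self_nonneg (fun h => hv0 (inner_self_eq_zero.1 h.symm))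
  have hm0 : (m : ℝ) ≠ 0 := ne_of_gt hmpos
  have hmN : m ≠ 0 := by
    intro h; rw [h] at hm0; simp at hm0
  -- the subgroup of ℤ of pairings with v
  set H : AddSubgroup ℤ :=
    { carrier := {k : ℤ | ∃ x ∈ L, ⟪x, v⟫_ℝ = (k : ℝ)}
      zero_mem' := ⟨0, L.zero_mem, by simp⟩
      add_mem' := by
        rintro a c ⟨x, hx, hxe⟩ ⟨y, hy, hye⟩
        exact ⟨x + y, L.add_mem hx hy, by rw [inner_add_left, hxe, hye]; push_cast; ring⟩
      neg_mem' := by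
        rintro a ⟨x, hx, hxe⟩
        exact ⟨-x, L.neg_mem hx, by rw [inner_neg_left, hxe]; push_cast; ring⟩ } with hHdef
  obtain ⟨g, hg⟩ := Int.subgroup_cyclic H
  have hmem : ∀ k : ℤ, k ∈ H ↔ ∃ j : ℤ, j • g = k := by
    intro k; rw [hg]; exact AddSubgroup.mem_closure_singleton
  have hmH : (m : ℤ) ∈ H := ⟨v, hv, by rw [hm]; norm_num⟩
  have hg0 : g ≠ 0 := by
    intro h
    obtain ⟨j, hj⟩ := (hmem m).1 hmH
    rw [h, smul_zero] at hj
    exact hmN (by exact_mod_cast hj.symm)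
  have hgr : (g : ℝ) ≠ 0 := Int.cast_ne_zero.2 hg0
  -- v / g ∈ L
  have hdvd : ∀ x ∈ L, ∃ j : ℤ, ⟪x, v⟫_ℝ = ((j * g : ℤ) : ℝ) := by
    intro x hx
    obtain ⟨k, hk⟩ := hint x hx v hv
    have : k ∈ H := ⟨x, hx, hk⟩
    obtain ⟨j, hj⟩ := (hmem k).1 this
    exact ⟨j, by rw [hk, ← hj]; simp [smul_eq_mul]⟩
  have hvg : (g : ℝ)⁻¹ • v ∈ L := by
    rw [hLd]
    intro y hy
    obtain ⟨j, hj⟩ := hdvd y hy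
    refine ⟨j, ?_⟩
    rw [real_inner_smul_left, real_inner_comm, hj]
    push_cast
    field_simp
  -- primitivity forces g = ± 1
  have hgabs : g.natAbs = 1 := by
    by_contra hne
    have h1 : 1 ≤ g.natAbs := Nat.one_le_iff_ne_zero.2 (Int.natAbs_ne_zero.2 hg0)
    have hlt : 1 < g.natAbs := lt_of_le_of_ne h1 (Ne.symm hne)
    have hwL : ((g.natAbs : ℝ))⁻¹ • v ∈ L := by
      rcases Int.natAbs_eq g with h | h
      · have he : ((g.natAbs : ℝ)) = (g : ℝ) := by
          have hc := congrArg (fun z : ℤ => (z : ℝ)) h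
          simp only [Int.cast_natCast] at hc
          exact hc.symm
        rw [he]; exact hvg
      · have he' : (g.natAbs : ℤ) = -g := by omega
        have he : ((g.natAbs : ℝ)) = -(g : ℝ) := by
          have hc := congrArg (fun z : ℤ => (z : ℝ)) he'
          simp only [Int.cast_neg, Int.cast_natCast] at hc
          exact hc
        rw [he, ← neg_inv, neg_smul]
        exact L.neg_mem hvg
    refine hprim g.natAbs hlt _ hwL ?_
    rw [smul_smul]
    have hne0 : (g.natAbs : ℝ) ≠ 0 := Nat.cast_ne_zero.2 (by omega)
    rw [mul_inv_cancel₀ hne0, one_smul]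
  -- get u with ⟪u, v⟫ = 1
  have h1H : (1 : ℤ) ∈ H := by
    have hgg : g * g = 1 := by
      rcases Int.natAbs_eq g with h | h <;> rw [h, hgabs] <;> ring
    exact (hmem 1).2 ⟨g, by rw [smul_eq_mul, hgg]⟩
  obtain ⟨u, hu, huv⟩ : ∃ u ∈ L, ⟪u, v⟫_ℝ = (1 : ℝ) := by
    obtain ⟨u, hu, he⟩ := h1H
    exact ⟨u, hu, by exact_mod_cast he⟩
  have hvu : ⟪v, u⟫_ℝ = 1 := by rw [real_inner_comm]; exact huv
  -- the key structural fact
  have hkey : ∀ x : EuclideanSpace ℝ (Fin n), x ∈ LvStar → (x - ⟪x, u⟫_ℝ • v) ∈ L ∧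
      ∃ k : ℤ, (m : ℝ) * ⟪x, u⟫_ℝ = (k : ℝ) := by
    intro x hx
    obtain ⟨hxv, hxd⟩ := (hLvSd x).1 hx
    have hx'L : (x - ⟪x, u⟫_ℝ • v) ∈ L := by
      rw [hLd]
      intro y hy
      obtain ⟨k, hk⟩ := hint y hy v hv
      have hzL : y - (k : ℝ) • u ∈ L := by
        have hce : (k : ℝ) • u = k • u := Int.cast_smul_eq_zsmul ℝ k u
        rw [hce]
        exact L.sub_mem hy (L.zsmul_mem hu k)
      have hzv : ⟪y - (k : ℝ) • u, v⟫_ℝ = 0 := by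
        rw [inner_sub_left, real_inner_smul_left, hk, huv]; ring
      have hzLv : y - (k : ℝ) • u ∈ Lv := (hLvd _).2 ⟨hzL, hzv⟩
      obtain ⟨j, hj⟩ := hxd _ hzLv
      refine ⟨j, ?_⟩
      have e1 : ⟪x - ⟪x, u⟫_ℝ • v, y⟫_ℝ = ⟪x, y⟫_ℝ - ⟪x, u⟫_ℝ * ⟪v, y⟫_ℝ := by
        rw [inner_sub_left, real_inner_smul_left]
      have e2 : ⟪x, y⟫_ℝ = ⟪x, y - (k : ℝ) • u⟫_ℝ + (k : ℝ) * ⟪x, u⟫_ℝ := by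
        rw [← real_inner_smul_right, ← inner_add_right, sub_add_cancel]
      have e3 : ⟪v, y⟫_ℝ = ⟪v, y - (k : ℝ) • u⟫_ℝ + (k : ℝ) * ⟪v, u⟫_ℝ := by
        rw [← real_inner_smul_right, ← inner_add_right, sub_add_cancel]
      have e4 : ⟪v, y - (k : ℝ) • u⟫_ℝ = 0 := by rw [real_inner_comm]; exact hzv
      rw [e1, e2, e3, e4, hj, hvu]
      ring
    refine ⟨hx'L, ?_⟩
    obtain ⟨k, hk⟩ := hint _ hx'L v hv
    refine ⟨-k, ?_⟩
    rw [inner_sub_left, real_inner_smul_left, hxv, hm] at hk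
    push_cast
    linarith
  -- the homomorphism
  have hfloor : ∀ x : LvStar,
      ((⌊(m : ℝ) * ⟪(x : EuclideanSpace ℝ (Fin n)), u⟫_ℝ⌋ : ℤ) : ℝ) =
        (m : ℝ) * ⟪(x : EuclideanSpace ℝ (Fin n)), u⟫_ℝ := by
    intro x
    obtain ⟨-, k, hk⟩ := hkey (x : EuclideanSpace ℝ (Fin n)) x.2
    rw [hk, Int.floor_intCast]
  set φ : LvStar →+ ZMod m :=
    { toFun := fun x => ((⌊(m : ℝ) * ⟪(x : EuclideanSpace ℝ (Fin n)), u⟫_ℝ⌋ : ℤ) : ZMod m)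
      map_zero' := by simp
      map_add' := by
        intro x y
        have hxy := hfloor (x + y)
        have hx := hfloor x
        have hy := hfloor y
        simp only [AddSubgroup.coe_add] at hxy
        have key : ⌊(m : ℝ) * ⟪((x : EuclideanSpace ℝ (Fin n)) + y), u⟫_ℝ⌋ =
            ⌊(m : ℝ) * ⟪(x : EuclideanSpace ℝ (Fin n)), u⟫_ℝ⌋ +
            ⌊(m : ℝ) * ⟪(y : EuclideanSpace ℝ (Fin n)), u⟫_ℝ⌋ := by
          have hcast : ((⌊(m : ℝ) * ⟪((x : EuclideanSpace ℝ (Fin n)) + y), u⟫_ℝ⌋ : ℤ) : ℝ) =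
              (((⌊(m : ℝ) * ⟪(x : EuclideanSpace ℝ (Fin n)), u⟫_ℝ⌋ +
              ⌊(m : ℝ) * ⟪(y : EuclideanSpace ℝ (Fin n)), u⟫_ℝ⌋ : ℤ)) : ℝ) := by
            push_cast
            rw [hxy, hx, hy, inner_add_left]
            ring
          exact_mod_cast hcast
        simp only [AddSubgroup.coe_add, key]
        push_cast
        ring } with hφdef
  -- kernel computation
  have hker : φ.ker = Lv.addSubgroupOf LvStar := by
    ext x
    simp only [AddMonoidHom.mem_ker, AddSubgroup.mem_addSubgroupOf, hφdef,
      AddMonoidHom.coe_mk, ZeroHom.coe_mk]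
    rw [ZMod.intCast_zmod_eq_zero_iff_dvd]
    constructor
    · rintro ⟨a, ha⟩
      have hfx := hfloor x
      have h1 : (m : ℝ) * ⟪(x : EuclideanSpace ℝ (Fin n)), u⟫_ℝ = (m : ℝ) * (a : ℝ) := by
        rw [← hfx, ha]; push_cast; ring
      have hxu := mul_left_cancel₀ hm0 h1
      obtain ⟨hx'L, -⟩ := hkey (x : EuclideanSpace ℝ (Fin n)) x.2
      have hxL : (x : EuclideanSpace ℝ (Fin n)) ∈ L := by
        have hmem2 : ((x : EuclideanSpace ℝ (Fin n)) -
            ⟪(x : EuclideanSpace ℝ (Fin n)), u⟫_ℝ • v) + a • v ∈ L :=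
          L.add_mem hx'L (L.zsmul_mem hv a)
        have heq : (x : EuclideanSpace ℝ (Fin n)) = ((x : EuclideanSpace ℝ (Fin n)) -
            ⟪(x : EuclideanSpace ℝ (Fin n)), u⟫_ℝ • v) + a • v := by
          rw [← Int.cast_smul_eq_zsmul ℝ a v, ← hxu]; abel
        rw [heq]; exact hmem2
      exact (hLvd _).2 ⟨hxL, ((hLvSd _).1 x.2).1⟩
    · intro hxLv
      obtain ⟨hxL, -⟩ := (hLvd _).1 hxLv
      obtain ⟨a, ha⟩ := hint _ hxL u hu
      refine ⟨a, ?_⟩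
      rw [ha]
      have hc : (m : ℝ) * (a : ℝ) = (((m : ℤ) * a : ℤ) : ℝ) := by push_cast; ring
      rw [hc, Int.floor_intCast]
  -- surjectivity
  have hwS : u - (m : ℝ)⁻¹ • v ∈ LvStar := by
    rw [hLvSd]
    constructor
    · rw [inner_sub_left, real_inner_smul_left, huv, hm]
      field_simp
      ring
    · intro y hy
      obtain ⟨hyL, hyv⟩ := (hLvd _).1 hy
      obtain ⟨k, hk⟩ := hint u hu y hyL
      refine ⟨k, ?_⟩
      rw [inner_sub_left, real_inner_smul_left, hk]
      have hvy : ⟪v, y⟫_ℝ = 0 := by rw [real_inner_comm]; exact hyv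
      rw [hvy]; ring
  set w : LvStar := ⟨u - (m : ℝ)⁻¹ • v, hwS⟩ with hwdef
  have hφw : φ w = -1 := by
    obtain ⟨a, ha⟩ := hint u hu u hu
    have hcomp : (m : ℝ) * ⟪(w : EuclideanSpace ℝ (Fin n)), u⟫_ℝ = ((m * a - 1 : ℤ) : ℝ) := by
      show (m : ℝ) * ⟪u - (m : ℝ)⁻¹ • v, u⟫_ℝ = _
      rw [inner_sub_left, real_inner_smul_left, ha, hvu]
      push_cast
      field_simp
    show ((⌊(m : ℝ) * ⟪(w : EuclideanSpace ℝ (Fin n)), u⟫_ℝ⌋ : ℤ) : ZMod m) = -1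
    rw [hcomp, Int.floor_intCast]
    push_cast
    simp [ZMod.natCast_self]
  have hsurj : Function.Surjective φ := by
    intro c
    obtain ⟨k, hk⟩ := ZMod.intCast_surjective (n := m) c
    refine ⟨(-k) • w, ?_⟩
    rw [map_zsmul, hφw, zsmul_eq_mul, ← hk]
    push_cast
    ring
  exact ⟨(QuotientAddGroup.quotientAddEquivOfEq hker.symm).trans
    (QuotientAddGroup.quotientKerEquivOfSurjective φ hsurj)⟩
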